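/- For every h > 0, the function T_h is differentiable at 0 with deriv T_h 0 = −2h · ∑_{i < r} (s i)⁻², and in particular deriv T_h 0 < 0. -/

import Mathlib

/-- The PRO function `T_h(α) = f₁(α) + h·f₂(α)` for Tikhonov regularization. -/
noncomputable def proT (r : ℕ) (hr : 0 < r) (s : Fin r → ℝ) (h : ℝ) (α : ℝ) : ℝ :=
  α ^ 2 / (α + (s ⟨0, hr⟩) ^ 2) ^ 2 + h * ∑ i, (s i) ^ 4 / (α + (s i) ^ 2) ^ 2

/-- For every `h > 0`, `T_h` is differentiable at `0` with
`deriv T_h 0 = −2h · ∑_{i<r} (s i)⁻²`, and in particular `deriv T_h 0 < 0`. -/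
theorem proT_deriv_at_zero (r : ℕ) (hr : 0 < r) (s : Fin r → ℝ)
    (hpos : ∀ i, 0 < s i) (hmax : ∀ i, s i ≤ s ⟨0, hr⟩) :
    ∀ h : ℝ, 0 < h →
      HasDerivAt (proT r hr s h) (-2 * h * ∑ i, ((s i) ^ 2)⁻¹) 0 ∧
      deriv (proT r hr s h) 0 < 0 := by
  intro h hh
  have hc : ((0 : ℝ) + (s ⟨0, hr⟩) ^ 2) ^ 2 ≠ 0 := by
    have := hpos ⟨0, hr⟩; positivity
  have h1 : HasDerivAt (fun α : ℝ => α ^ 2 / (α + (s ⟨0, hr⟩) ^ 2) ^ 2) 0 0 := by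
    have d1 := hasDerivAt_pow 2 (0 : ℝ)
    have d2 := ((hasDerivAt_id (0 : ℝ)).add_const ((s ⟨0, hr⟩) ^ 2)).pow 2
    have := d1.div d2 hc
    refine this.congr_deriv ?_
    have := (hpos ⟨0, hr⟩).ne'
    simp
  have h2 : ∀ i : Fin r, HasDerivAt
      (fun α : ℝ => (s i) ^ 4 / (α + (s i) ^ 2) ^ 2) (-2 * ((s i) ^ 2)⁻¹) 0 := by
    intro i
    have hci : ((0 : ℝ) + (s i) ^ 2) ^ 2 ≠ 0 := by
      have := hpos i; positivity
    have d2 := ((hasDerivAt_id (0 : ℝ)).add_const ((s i) ^ 2)).pow 2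
    have := (hasDerivAt_const (0 : ℝ) ((s i) ^ 4)).div d2 hci
    refine this.congr_deriv ?_
    have hne := (hpos i).ne'
    simp only [Pi.pow_apply, id, zero_add]
    field_simp
    ring
  have hsum : HasDerivAt (fun α : ℝ => ∑ i, (s i) ^ 4 / (α + (s i) ^ 2) ^ 2)
      (∑ i, -2 * ((s i) ^ 2)⁻¹) 0 :=
    HasDerivAt.fun_sum (fun i _ => h2 i)
  have key : HasDerivAt (proT r hr s h) (-2 * h * ∑ i, ((s i) ^ 2)⁻¹) 0 := by
    have := h1.add (hsum.const_mul h)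
    have heq : 0 + h * ∑ i, -2 * ((s i) ^ 2)⁻¹ = -2 * h * ∑ i, ((s i) ^ 2)⁻¹ := by
      rw [← Finset.mul_sum]; ring
    rw [heq] at this
    exact this
  refine ⟨key, ?_⟩
  rw [key.deriv]
  have hspos : 0 < ∑ i, ((s i) ^ 2)⁻¹ :=
    Finset.sum_pos (fun i _ => by have := hpos i; positivity) ⟨⟨0, hr⟩, Finset.mem_univ _⟩
  nlinarith
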